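/- If a group G has no free subsemigroup of rank 2, then for all a, b ∈ G the subgroup generated by {b^{-n} a b^n : n ∈ ℤ} is finitely generated. -/

import Mathlib

section Aux

variable {G : Type*} [Group G] (a b : G)

/-- The conjugates `b⁻ⁿ a bⁿ`. -/
private def cw (n : ℤ) : G := b ^ (-n) * a * b ^ n

private lemma conj_cw (t k : ℤ) : b ^ t * cw a b k * b ^ (-t) = cw a b (k - t) := by
  simp only [cw]
  rw [show -(k - t) = t + -k by ring, zpow_add, show (k : ℤ) - t = k + -t by ring, zpow_add]
  group

/-- Left-nested product of conjugates along a boolean word, with decreasing index. -/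
private def RR : List Bool → ℤ → G
  | [], _ => 1
  | (d :: t), k => (cond d (cw a b k) 1) * RR t (k - 1)

private lemma conj_RR (l : List Bool) (t k : ℤ) :
    b ^ t * RR a b l k * b ^ (-t) = RR a b l (k - t) := by
  induction l generalizing k with
  | nil => simp only [RR, mul_one]; group
  | cons d tl ih =>
      simp only [RR]
      rw [show b ^ t * (cond d (cw a b k) 1 * RR a b tl (k - 1)) * b ^ (-t)
          = (b ^ t * cond d (cw a b k) 1 * b ^ (-t)) *
            (b ^ t * RR a b tl (k - 1) * b ^ (-t)) by group, ih,
        show k - 1 - t = k - t - 1 by ring]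
      congr 1
      cases d
      · simp only [cond_false, mul_one]; group
      · simp only [cond_true]; exact conj_cw a b t k

private lemma RR_append (l₁ l₂ : List Bool) (k : ℤ) :
    RR a b (l₁ ++ l₂) k = RR a b l₁ k * RR a b l₂ (k - l₁.length) := by
  induction l₁ generalizing k with
  | nil => simp [RR]
  | cons d tl ih =>
      simp only [List.cons_append, RR, List.length_cons, mul_assoc, List.append_eq]
      rw [show RR a b (tl ++ l₂) (k - 1) = RR a b tl (k - 1) * RR a b l₂ (k - 1 - tl.length)
        from ih (k - 1),
        show (k - ((tl.length : ℕ) + 1 : ℕ)) = k - 1 - tl.length by push_cast; ring]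

private lemma RR_mem (l : List Bool) (k : ℤ) :
    RR a b l k ∈ Subgroup.closure (cw a b '' Set.Icc (k - l.length + 1) k) := by
  induction l generalizing k with
  | nil => exact one_mem _
  | cons d tl ih =>
      simp only [RR, List.length_cons]
      refine mul_mem ?_ ?_
      · cases d
        · exact one_mem _
        · refine Subgroup.subset_closure ⟨k, ?_, rfl⟩
          simp only [Set.mem_Icc]
          push_cast
          constructor <;> omega
      · refine Subgroup.closure_mono (Set.image_mono ?_) (ih (k - 1))
        intro x hx
        simp only [Set.mem_Icc] at hx ⊢
        push_cast at hx ⊢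
        omega

private lemma RR_mem_range (l : List Bool) (k : ℤ) :
    RR a b l k ∈ Subgroup.closure (Set.range (cw a b)) := by
  refine Subgroup.closure_mono ?_ (RR_mem a b l k)
  exact Set.image_subset_range _ _

/-- Product of the word, with `true ↦ a*b`, `false ↦ b`. -/
private def pw (l : List Bool) : G := (l.map (fun d => cond d (a * b) b)).prod

private lemma pw_append (l₁ l₂ : List Bool) :
    pw a b (l₁ ++ l₂) = pw a b l₁ * pw a b l₂ := by
  simp [pw]

private lemma pw_eq (l : List Bool) : pw a b l = RR a b l 0 * b ^ (l.length : ℤ) := by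
  induction l with
  | nil => simp [pw, RR]
  | cons d tl ih =>
      have hconj : RR a b tl (-1) = b * RR a b tl 0 * b⁻¹ := by
        have := conj_RR a b tl 1 0
        simp only [zpow_one, zero_sub] at this
        rw [← this]; group
      have h1 : pw a b (d :: tl) = (cond d (a * b) b) * pw a b tl := by
        simp [pw]
      have h2 : RR a b (d :: tl) 0 = (cond d a 1) * RR a b tl (-1) := by
        have hc0 : cw a b 0 = a := by simp [cw]
        simp [RR, hc0, show (0:ℤ) - 1 = -1 by norm_num]
      rw [h1, h2, ih, hconj, List.length_cons,
        show (((tl.length + 1 : ℕ)) : ℤ) = (tl.length : ℤ) + 1 by push_cast; ring,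
        zpow_add, zpow_one]
      cases d
      · simp only [cond_false, one_mul]; group
      · simp only [cond_true]; group

private lemma lift_eq_pw (w : FreeSemigroup Bool) :
    FreeSemigroup.lift (fun d => cond d (a * b) b) w = pw a b (w.head :: w.tail) := by
  induction w using FreeSemigroup.recOnMul with
  | ih1 x =>
      show FreeSemigroup.lift (fun d => cond d (a * b) b) (FreeSemigroup.of x)
        = pw a b (x :: [])
      rw [FreeSemigroup.lift_of]
      simp [pw]
  | ih2 x y hx hy =>
      rw [map_mul, hx, hy, ← pw_append]
      rfl

/-- claim A : upward recursion. -/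
private lemma claimA (t₁ t₂ : List Bool) (r : ℕ) (h1 : t₁.length ≤ r) (h2 : t₂.length ≤ r)
    (k₀ : ℤ) (E : cw a b k₀ * RR a b t₁ (k₀ - 1) = RR a b t₂ (k₀ - 1)) (k : ℤ) :
    cw a b k ∈ Subgroup.closure (cw a b '' Set.Icc (k - r) (k - 1)) := by
  have E' : cw a b k * RR a b t₁ (k - 1) = RR a b t₂ (k - 1) := by
    have h := congrArg (fun x => b ^ (k₀ - k) * x * b ^ (-(k₀ - k))) E
    simp only [show ∀ x y : G, b ^ (k₀ - k) * (x * y) * b ^ (-(k₀ - k)) =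
      (b ^ (k₀ - k) * x * b ^ (-(k₀ - k))) * (b ^ (k₀ - k) * y * b ^ (-(k₀ - k))) from
        by intros; group, conj_cw, conj_RR] at h
    rw [show k₀ - (k₀ - k) = k by ring, show k₀ - 1 - (k₀ - k) = k - 1 by ring] at h
    exact h
  have hmem : ∀ t : List Bool, t.length ≤ r →
      RR a b t (k - 1) ∈ Subgroup.closure (cw a b '' Set.Icc (k - r) (k - 1)) := by
    intro t ht
    refine Subgroup.closure_mono (Set.image_mono ?_) (RR_mem a b t (k - 1))
    intro x hx
    simp only [Set.mem_Icc] at hx ⊢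
    omega
  have hcw : cw a b k = RR a b t₂ (k - 1) * (RR a b t₁ (k - 1))⁻¹ := by
    rw [← E']; group
  rw [hcw]
  exact mul_mem (hmem t₂ h2) (inv_mem (hmem t₁ h1))

/-- claim B : downward recursion. -/
private lemma claimB (p₁ p₂ : List Bool) (r : ℕ) (hlen : p₁.length = p₂.length)
    (h1 : p₁.length ≤ r)
    (E : RR a b p₁ 0 * cw a b (-(p₁.length : ℤ)) = RR a b p₂ 0) (k : ℤ) :
    cw a b k ∈ Subgroup.closure (cw a b '' Set.Icc (k + 1) (k + r)) := by
  set m : ℤ := (p₁.length : ℤ) with hm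
  have E' : RR a b p₁ (m + k) * cw a b k = RR a b p₂ (m + k) := by
    have h := congrArg (fun x => b ^ (-m - k) * x * b ^ (-(-m - k))) E
    simp only [show ∀ x y : G, b ^ (-m - k) * (x * y) * b ^ (-(-m - k)) =
      (b ^ (-m - k) * x * b ^ (-(-m - k))) * (b ^ (-m - k) * y * b ^ (-(-m - k))) from
        by intros; group, conj_cw, conj_RR] at h
    rw [show (0:ℤ) - (-m - k) = m + k by ring, show -m - (-m - k) = k by ring] at h
    exact h
  have hmem : ∀ p : List Bool, p.length = p₁.length →
      RR a b p (m + k) ∈ Subgroup.closure (cw a b '' Set.Icc (k + 1) (k + r)) := by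
    intro p hp
    refine Subgroup.closure_mono (Set.image_mono ?_) (RR_mem a b p (m + k))
    intro x hx
    simp only [Set.mem_Icc, hp] at hx ⊢
    omega
  have hcw : cw a b k = (RR a b p₁ (m + k))⁻¹ * RR a b p₂ (m + k) := by
    rw [← E']; group
  rw [hcw]
  exact mul_mem (inv_mem (hmem p₁ rfl)) (hmem p₂ hlen.symm)

private lemma exists_first_diff :
    ∀ {l₁ l₂ : List Bool}, l₁.length = l₂.length → l₁ ≠ l₂ →
      ∃ (p t₁ t₂ : List Bool) (d₁ d₂ : Bool), d₁ ≠ d₂ ∧ t₁.length = t₂.length ∧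
        l₁ = p ++ d₁ :: t₁ ∧ l₂ = p ++ d₂ :: t₂ := by
  intro l₁
  induction l₁ with
  | nil => intro l₂ h hne; cases l₂ <;> simp_all
  | cons d t ih =>
      intro l₂ h hne
      cases l₂ with
      | nil => simp at h
      | cons d' t' =>
          by_cases hd : d = d'
          · subst hd
            have ht : t ≠ t' := by rintro rfl; exact hne rfl
            obtain ⟨p, t₁, t₂, d₁, d₂, h1, h2, h3, h4⟩ := ih (by simpa using h) ht
            exact ⟨d :: p, t₁, t₂, d₁, d₂, h1, h2, by simp [h3], by simp [h4]⟩
          · exact ⟨[], t, t', d, d', hd, by simpa using h, rfl, rfl⟩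

end Aux

/-- If `G` has no free subsemigroup of rank 2, then for all `a b : G` the subgroup
generated by `{b⁻ⁿ a bⁿ : n ∈ ℤ}` is finitely generated. -/
theorem conjugates_fg_of_no_free_subsemigroup {G : Type*} [Group G]
    (hnofree : ∀ φ : FreeSemigroup Bool →ₙ* G, ¬ Function.Injective φ)
    (a b : G) :
    (Subgroup.closure {x : G | ∃ n : ℤ, x = b ^ (-n) * a * b ^ n}).FG := by
  have hset : {x : G | ∃ n : ℤ, x = b ^ (-n) * a * b ^ n} = Set.range (cw a b) := by
    ext x
    constructor
    · rintro ⟨n, rfl⟩; exact ⟨n, rfl⟩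
    · rintro ⟨n, rfl⟩; exact ⟨n, rfl⟩
  rw [hset]
  set H := Subgroup.closure (Set.range (cw a b)) with hH
  obtain ⟨u, v, huv, hne⟩ := Function.not_injective_iff.mp
    (hnofree (FreeSemigroup.lift (fun d => cond d (a * b) b)))
  rw [lift_eq_pw, lift_eq_pw] at huv
  set l₁ := u.head :: u.tail with hl₁
  set l₂ := v.head :: v.tail with hl₂
  have hlne : l₁ ≠ l₂ := by
    intro hl
    apply hne
    rw [hl₁, hl₂] at hl
    exact FreeSemigroup.ext (by injection hl) (by injection hl)
  rw [pw_eq, pw_eq] at huv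
  by_cases hlen : l₁.length = l₂.length
  · -- hard case: equal lengths
    rw [hlen] at huv
    have hRR : RR a b l₁ 0 = RR a b l₂ 0 := mul_right_cancel huv
    set m : ℕ := l₁.length with hmdef
    -- claim A setup : first difference
    obtain ⟨p, t₁, t₂, d₁, d₂, hd, hteq, e₁, e₂⟩ := exists_first_diff hlen hlne
    have hlt₁ : t₁.length ≤ m := by
      have : l₁.length = p.length + (t₁.length + 1) := by rw [e₁]; simp
      omega
    have hlt₂ : t₂.length ≤ m := by
      have : l₁.length = p.length + (t₁.length + 1) := by rw [e₁]; simp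
      omega
    have hA0 : ∃ (s₁ s₂ : List Bool) (k₀ : ℤ), s₁.length ≤ m ∧ s₂.length ≤ m ∧
        cw a b k₀ * RR a b s₁ (k₀ - 1) = RR a b s₂ (k₀ - 1) := by
      have key : (cond d₁ (cw a b (-(p.length:ℤ))) 1) * RR a b t₁ (-(p.length:ℤ) - 1)
          = (cond d₂ (cw a b (-(p.length:ℤ))) 1) * RR a b t₂ (-(p.length:ℤ) - 1) := by
        rw [e₁, e₂, RR_append, RR_append] at hRR
        simp only [RR, zero_sub] at hRR
        exact mul_left_cancel hRR
      cases d₁ <;> cases d₂ <;>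
        simp only [cond_true, cond_false, one_mul] at key hd
      · exact absurd rfl hd
      · exact ⟨t₂, t₁, -(p.length:ℤ), hlt₂, hlt₁, key.symm⟩
      · exact ⟨t₁, t₂, -(p.length:ℤ), hlt₁, hlt₂, key⟩
      · exact absurd rfl hd
    obtain ⟨s₁, s₂, k₀, hs₁, hs₂, hEA⟩ := hA0
    have hA : ∀ k : ℤ, cw a b k ∈ Subgroup.closure (cw a b '' Set.Icc (k - m) (k - 1)) :=
      claimA a b s₁ s₂ m hs₁ hs₂ k₀ hEA
    -- claim B setup : last difference (via reversed lists)
    have hrlen : l₁.reverse.length = l₂.reverse.length := by simpa using hlen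
    have hrne : l₁.reverse ≠ l₂.reverse := fun h => hlne (by
      simpa using congrArg List.reverse h)
    obtain ⟨q, r₁, r₂, e₁', e₂', hd', hreq, f₁, f₂⟩ := exists_first_diff hrlen hrne
    have g₁ : l₁ = r₁.reverse ++ e₁' :: q.reverse := by
      have := congrArg List.reverse f₁
      simpa using this
    have g₂ : l₂ = r₂.reverse ++ e₂' :: q.reverse := by
      have := congrArg List.reverse f₂
      simpa using this
    have hplen : r₁.reverse.length = r₂.reverse.length := by simpa using hreq
    have hlr₁ : r₁.reverse.length ≤ m := by
      have : l₁.length = r₁.reverse.length + (q.reverse.length + 1) := by rw [g₁]; simp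
      omega
    have hlr₂ : r₂.reverse.length ≤ m := by
      omega
    have hB0 : ∃ (p₁ p₂ : List Bool), p₁.length = p₂.length ∧ p₁.length ≤ m ∧
        RR a b p₁ 0 * cw a b (-(p₁.length : ℤ)) = RR a b p₂ 0 := by
      have key : RR a b r₁.reverse 0 * (cond e₁' (cw a b (-(r₂.reverse.length:ℤ))) 1)
          = RR a b r₂.reverse 0 * (cond e₂' (cw a b (-(r₂.reverse.length:ℤ))) 1) := by
        rw [g₁, g₂, RR_append, RR_append] at hRR
        simp only [RR, zero_sub] at hRR
        rw [hplen] at hRR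
        rw [← mul_assoc, ← mul_assoc] at hRR
        exact mul_right_cancel hRR
      cases e₁' <;> cases e₂' <;>
        simp only [cond_true, cond_false, mul_one] at key hd'
      · exact absurd rfl hd'
      · exact ⟨r₂.reverse, r₁.reverse, hplen.symm, hlr₂, key.symm⟩
      · refine ⟨r₁.reverse, r₂.reverse, hplen, hlr₁, ?_⟩
        rw [hplen]; exact key
      · exact absurd rfl hd'
    obtain ⟨p₁, p₂, hp12, hpm, hEB⟩ := hB0
    have hB : ∀ k : ℤ, cw a b k ∈ Subgroup.closure (cw a b '' Set.Icc (k + 1) (k + m)) :=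
      claimB a b p₁ p₂ m hp12 hpm hEB
    -- conclude by induction
    set K := Subgroup.closure (cw a b '' Set.Icc (-(m:ℤ)) m) with hK
    have main : ∀ n : ℕ, ∀ j : ℤ, -((m:ℤ) + n) ≤ j → j ≤ (m:ℤ) + n → cw a b j ∈ K := by
      intro n
      induction n with
      | zero =>
          intro j hj1 hj2
          refine Subgroup.subset_closure ⟨j, ?_, rfl⟩
          simp only [Set.mem_Icc]
          push_cast at hj1 hj2 ⊢
          omega
      | succ n ih =>
          intro j hj1 hj2
          by_cases hj' : -((m:ℤ) + n) ≤ j ∧ j ≤ (m:ℤ) + n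
          · exact ih j hj'.1 hj'.2
          · rcases le_or_gt 0 j with hpos | hneg
            · refine (Subgroup.closure_le K).mpr ?_ (hA j)
              rintro x ⟨i, hi, rfl⟩
              simp only [Set.mem_Icc] at hi
              refine ih i ?_ ?_ <;> push_cast at hj1 hj2 ⊢ <;> omega
            · refine (Subgroup.closure_le K).mpr ?_ (hB j)
              rintro x ⟨i, hi, rfl⟩
              simp only [Set.mem_Icc] at hi
              refine ih i ?_ ?_ <;> push_cast at hj1 hj2 ⊢ <;> omega
    have hHK : H = K := by
      apply le_antisymm
      · rw [hH]
        refine (Subgroup.closure_le K).mpr ?_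
        rintro x ⟨n, rfl⟩
        exact main n.natAbs n (by omega) (by omega)
      · rw [hH, hK]
        exact Subgroup.closure_mono (Set.image_subset_range _ _)
    rw [hHK, hK]
    exact (Subgroup.fg_iff _).mpr ⟨_, rfl, (Set.finite_Icc _ _).image _⟩
  · -- easy case: b ^ t ∈ H with t ≠ 0
    have hbt : b ^ ((l₁.length : ℤ) - l₂.length) = (RR a b l₁ 0)⁻¹ * RR a b l₂ 0 := by
      have hx : RR a b l₂ 0 = RR a b l₁ 0 * (b ^ ((l₁.length:ℤ)) * (b ^ ((l₂.length:ℤ)))⁻¹) := by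
        rw [← mul_assoc, huv]; group
      rw [hx, sub_eq_add_neg, zpow_add, zpow_neg]
      group
    set t : ℤ := (l₁.length : ℤ) - l₂.length with ht
    have htne : t ≠ 0 := by
      simp only [ht, sub_ne_zero]
      exact_mod_cast hlen
    have hbtH : b ^ t ∈ H := by
      rw [ht, hbt]
      exact mul_mem (inv_mem (RR_mem_range a b l₁ 0)) (RR_mem_range a b l₂ 0)
    set s : ℤ := |t| with hs
    have hspos : 0 < s := abs_pos.mpr htne
    have hbsH : b ^ s ∈ H := by
      rcases abs_choice t with h | h
      · rw [hs, h]; exact hbtH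
      · rw [hs, h, zpow_neg]; exact inv_mem hbtH
    set K := Subgroup.closure (cw a b '' Set.Icc 0 (s - 1) ∪ {b ^ s}) with hK
    have hHK : H = K := by
      apply le_antisymm
      · rw [hH]
        refine (Subgroup.closure_le K).mpr ?_
        rintro x ⟨n, rfl⟩
        have hdiv : n % s + s * (n / s) = n := Int.emod_add_mul_ediv n s
        have hr0 : 0 ≤ n % s := Int.emod_nonneg n (by omega)
        have hrs : n % s < s := Int.emod_lt_of_pos n hspos
        have hcwr : cw a b (n % s) ∈ K :=
          Subgroup.subset_closure (Or.inl ⟨n % s, by simp only [Set.mem_Icc]; omega, rfl⟩)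
        have hbsK : b ^ s ∈ K := Subgroup.subset_closure (Or.inr rfl)
        have hconj : cw a b n = (b ^ s) ^ (-(n / s)) * cw a b (n % s) * (b ^ s) ^ (n / s) := by
          have h1 : (b ^ s) ^ (-(n / s)) = b ^ (-(s * (n / s))) := by
            rw [← zpow_mul]; congr 1; ring
          have h2 : (b ^ s) ^ (n / s) = b ^ (-(-(s * (n / s)))) := by
            rw [← zpow_mul]; congr 1; ring
          rw [h1, h2, conj_cw, show n % s - -(s * (n / s)) = n from by linarith]
        rw [hconj]
        exact mul_mem (mul_mem (zpow_mem hbsK _) hcwr) (zpow_mem hbsK _)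
      · rw [hK]
        refine (Subgroup.closure_le H).mpr ?_
        rintro x (⟨i, _, rfl⟩ | hx)
        · exact Subgroup.subset_closure ⟨i, rfl⟩
        · simp only [Set.mem_singleton_iff] at hx
          rw [hx, hH]
          exact hbsH
    rw [hHK, hK]
    exact (Subgroup.fg_iff _).mpr ⟨_, rfl,
      (((Set.finite_Icc (0:ℤ) (s-1)).image (cw a b)).union (Set.finite_singleton (b ^ s)))⟩
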